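/- Let A and B be commutative rings. The direct product A × B is perinormal if and only if both A and B are perinormal. -/

import Mathlib

open TensorProduct nonZeroDivisors

set_option maxHeartbeats 1000000
set_option synthInstance.maxHeartbeats 400000

/-- Going down for a ring homomorphism. -/
def GoingDown {R S : Type*} [CommRing R] [CommRing S] (f : R →+* S) : Prop :=
  ∀ (P₁ P₂ : Ideal R), P₁.IsPrime → P₂.IsPrime → P₁ ≤ P₂ →
    ∀ Q₂ : Ideal S, Q₂.IsPrime → Q₂.comap f = P₂ →
      ∃ Q₁ : Ideal S, Q₁.IsPrime ∧ Q₁ ≤ Q₂ ∧ Q₁.comap f = P₁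

section GD

variable {R S S' : Type*} [CommRing R] [CommRing S] [CommRing S']

lemma goingDown_of_comp_equiv {f : R →+* S} {g : R →+* S'} (φ : S ≃+* S')
    (hfg : (φ : S →+* S').comp f = g) (hf : GoingDown f) : GoingDown g := by
  have hsymm : (φ.symm : S' →+* S).comp g = f := by
    rw [← hfg]; ext x; simp
  intro P₁ P₂ h₁ h₂ hle Q₂ hQ₂ hcom
  obtain ⟨Q₁, hQ₁, hle', hc⟩ := hf P₁ P₂ h₁ h₂ hle (Q₂.comap (φ : S →+* S'))
    (hQ₂.comap _) (by rw [Ideal.comap_comap, hfg, hcom])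
  refine ⟨Q₁.comap (φ.symm : S' →+* S), hQ₁.comap _, ?_, ?_⟩
  · intro x hx
    have h2 : φ (φ.symm x) ∈ Q₂ := hle' hx
    rwa [RingEquiv.apply_symm_apply] at h2
  · rw [Ideal.comap_comap, hsymm, hc]

lemma goingDown_id : GoingDown (RingHom.id R) := by
  intro P₁ P₂ h₁ h₂ hle Q₂ hQ₂ hcom
  refine ⟨P₁, h₁, ?_, by simp⟩
  have : Q₂ = P₂ := by simpa using hcom
  rw [this]; exact hle

lemma goingDown_of_bijective {f : R →+* S} (hf : Function.Bijective f) : GoingDown f := by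
  have := goingDown_of_comp_equiv (RingEquiv.ofBijective f hf)
    (g := f) (f := RingHom.id R) (by ext x; rfl) goingDown_id
  exact this

end GD

section GDProd

variable {R R' S S' : Type*} [CommRing R] [CommRing R'] [CommRing S] [CommRing S']
variable {f : R →+* S} {g : R' →+* S'}

lemma comap_prodMap_prod (I : Ideal S) (J : Ideal S') :
    (Ideal.prod I J).comap (f.prodMap g) = Ideal.prod (I.comap f) (J.comap g) := by
  ext ⟨x, y⟩
  simp [Ideal.mem_prod, Ideal.mem_comap]

lemma prod_le_prod_iff {I I' : Ideal S} {J J' : Ideal S'} :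
    Ideal.prod I J ≤ Ideal.prod I' J' ↔ I ≤ I' ∧ J ≤ J' := by
  constructor
  · intro h
    constructor
    · intro x hx; exact (h (show ((x, 0) : S × S') ∈ Ideal.prod I J from ⟨hx, J.zero_mem⟩)).1
    · intro y hy; exact (h (show ((0, y) : S × S') ∈ Ideal.prod I J from ⟨I.zero_mem, hy⟩)).2
  · rintro ⟨h1, h2⟩ ⟨x, y⟩ ⟨hx, hy⟩
    exact ⟨h1 hx, h2 hy⟩

lemma goingDown_prodMap (hf : GoingDown f) (hg : GoingDown g) : GoingDown (f.prodMap g) := by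
  intro P₁ P₂ h₁ h₂ hle Q₂ hQ₂ hcom
  rcases (Ideal.ideal_prod_prime Q₂).mp hQ₂ with ⟨q, hq, rfl⟩ | ⟨q, hq, rfl⟩
  · rw [comap_prodMap_prod, Ideal.comap_top] at hcom
    -- P₂ = prod (q.comap f) ⊤
    rcases (Ideal.ideal_prod_prime P₁).mp h₁ with ⟨p₁, hp₁, rfl⟩ | ⟨p₁, hp₁, rfl⟩
    · have hple : p₁ ≤ q.comap f := by
        have := hcom ▸ hle
        exact (prod_le_prod_iff.mp this).1
      obtain ⟨q₁, hq₁, hq₁le, hq₁c⟩ := hf p₁ (q.comap f) hp₁ (hq.comap f) hple q hq rfl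
      exact ⟨Ideal.prod q₁ ⊤, Ideal.isPrime_ideal_prod_top (h := hq₁),
        prod_le_prod_iff.mpr ⟨hq₁le, le_rfl⟩,
        by rw [comap_prodMap_prod, Ideal.comap_top, hq₁c]⟩
    · exfalso
      have := hcom ▸ hle
      have h2 : (⊤ : Ideal R) ≤ q.comap f := (prod_le_prod_iff.mp this).1
      exact (hq.comap f).ne_top (top_le_iff.mp h2)
  · rw [comap_prodMap_prod, Ideal.comap_top] at hcom
    rcases (Ideal.ideal_prod_prime P₁).mp h₁ with ⟨p₁, hp₁, rfl⟩ | ⟨p₁, hp₁, rfl⟩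
    · exfalso
      have := hcom ▸ hle
      have h2 : (⊤ : Ideal R') ≤ q.comap g := (prod_le_prod_iff.mp this).2
      exact (hq.comap g).ne_top (top_le_iff.mp h2)
    · have hple : p₁ ≤ q.comap g := by
        have := hcom ▸ hle
        exact (prod_le_prod_iff.mp this).2
      obtain ⟨q₁, hq₁, hq₁le, hq₁c⟩ := hg p₁ (q.comap g) hp₁ (hq.comap g) hple q hq rfl
      exact ⟨Ideal.prod ⊤ q₁, Ideal.isPrime_ideal_prod_top' (h := hq₁),
        prod_le_prod_iff.mpr ⟨le_rfl, hq₁le⟩,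
        by rw [comap_prodMap_prod, Ideal.comap_top, hq₁c]⟩

lemma goingDown_fst_of_prodMap (h : GoingDown (f.prodMap g)) : GoingDown f := by
  intro P₁ P₂ h₁ h₂ hle Q₂ hQ₂ hcom
  obtain ⟨Q₁, hQ₁, hQ₁le, hQ₁c⟩ := h (Ideal.prod P₁ ⊤) (Ideal.prod P₂ ⊤)
    (Ideal.isPrime_ideal_prod_top (h := h₁)) (Ideal.isPrime_ideal_prod_top (h := h₂))
    (prod_le_prod_iff.mpr ⟨hle, le_rfl⟩) (Ideal.prod Q₂ ⊤)
    (Ideal.isPrime_ideal_prod_top (h := hQ₂))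
    (by rw [comap_prodMap_prod, Ideal.comap_top, hcom])
  rcases (Ideal.ideal_prod_prime Q₁).mp hQ₁ with ⟨q, hq, rfl⟩ | ⟨q, hq, rfl⟩
  · rw [comap_prodMap_prod, Ideal.comap_top] at hQ₁c
    obtain ⟨hc1, -⟩ := Ideal.prod_inj.mp hQ₁c
    exact ⟨q, hq, (prod_le_prod_iff.mp hQ₁le).1, hc1⟩
  · exfalso
    rw [comap_prodMap_prod, Ideal.comap_top] at hQ₁c
    obtain ⟨hc1, -⟩ := Ideal.prod_inj.mp hQ₁c
    exact h₁.ne_top hc1.symm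

lemma goingDown_snd_of_prodMap (h : GoingDown (f.prodMap g)) : GoingDown g := by
  intro P₁ P₂ h₁ h₂ hle Q₂ hQ₂ hcom
  obtain ⟨Q₁, hQ₁, hQ₁le, hQ₁c⟩ := h (Ideal.prod ⊤ P₁) (Ideal.prod ⊤ P₂)
    (Ideal.isPrime_ideal_prod_top' (h := h₁)) (Ideal.isPrime_ideal_prod_top' (h := h₂))
    (prod_le_prod_iff.mpr ⟨le_rfl, hle⟩) (Ideal.prod ⊤ Q₂)
    (Ideal.isPrime_ideal_prod_top' (h := hQ₂))
    (by rw [comap_prodMap_prod, Ideal.comap_top, hcom])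
  rcases (Ideal.ideal_prod_prime Q₁).mp hQ₁ with ⟨q, hq, rfl⟩ | ⟨q, hq, rfl⟩
  · exfalso
    rw [comap_prodMap_prod, Ideal.comap_top] at hQ₁c
    obtain ⟨-, hc2⟩ := Ideal.prod_inj.mp hQ₁c
    exact h₁.ne_top hc2.symm
  · rw [comap_prodMap_prod, Ideal.comap_top] at hQ₁c
    obtain ⟨-, hc2⟩ := Ideal.prod_inj.mp hQ₁c
    exact ⟨q, hq, (prod_le_prod_iff.mp hQ₁le).2, hc2⟩

end GDProd

section FlatProd

variable (R M N : Type*) [CommRing R] [AddCommGroup M] [AddCommGroup N]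
  [Module R M] [Module R N]

lemma flat_prod [Module.Flat R M] [Module.Flat R N] : Module.Flat R (M × N) := by
  rw [Module.Flat.iff_rTensor_injective']
  intro I
  have hM := Module.Flat.rTensor_preserves_injective_linearMap (M := M) (I.subtype)
    I.injective_subtype
  have hN := Module.Flat.rTensor_preserves_injective_linearMap (M := N) (I.subtype)
    I.injective_subtype
  have h1 : Function.Injective (LinearMap.prodMap (LinearMap.rTensor M I.subtype)
      (LinearMap.rTensor N I.subtype)) := by
    rintro ⟨a, b⟩ ⟨c, d⟩ h
    obtain ⟨e1, e2⟩ := Prod.ext_iff.mp h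
    exact Prod.ext (hM e1) (hN e2)
  have hcomm : (TensorProduct.prodRight R R R M N).toLinearMap ∘ₗ
      LinearMap.rTensor (M × N) I.subtype
      = (LinearMap.prodMap (LinearMap.rTensor M I.subtype) (LinearMap.rTensor N I.subtype)) ∘ₗ
        (TensorProduct.prodRight R R (↥I) M N).toLinearMap := by
    apply TensorProduct.ext'
    rintro i ⟨m, n⟩
    simp
  have h2 : Function.Injective ((TensorProduct.prodRight R R R M N).toLinearMap ∘ₗ
      LinearMap.rTensor (M × N) I.subtype) := by
    rw [hcomm]
    exact h1.comp (TensorProduct.prodRight R R (↥I) M N).injective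
  intro a b hab
  exact h2 (by simp [hab])

lemma flat_fst_of_prod [Module.Flat R (M × N)] : Module.Flat R M :=
  Module.Flat.of_retract (LinearMap.inl R M N) (LinearMap.fst R M N)
    (LinearMap.fst_comp_inl R M N)

lemma flat_snd_of_prod [Module.Flat R (M × N)] : Module.Flat R N :=
  Module.Flat.of_retract (LinearMap.inr R M N) (LinearMap.snd R M N)
    (LinearMap.snd_comp_inr R M N)

end FlatProd

section FlatSurj

variable (R S M : Type*) [CommRing R] [CommRing S] [Algebra R S]
  [AddCommGroup M] [Module R M] [Module S M] [IsScalarTower R S M]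

lemma one_tmul_smul (hs : Function.Surjective (algebraMap R S)) (s : S) (m : M) :
    (1 : S) ⊗ₜ[R] (s • m) = s ⊗ₜ[R] m := by
  obtain ⟨r, rfl⟩ := hs s
  calc (1 : S) ⊗ₜ[R] (algebraMap R S r • m) = (1 : S) ⊗ₜ[R] (r • m) := by
        rw [algebraMap_smul]
    _ = (r • (1 : S)) ⊗ₜ[R] m := (TensorProduct.smul_tmul r (1 : S) m).symm
    _ = (algebraMap R S r) ⊗ₜ[R] m := by rw [Algebra.smul_def, mul_one]

/-- If `R → S` is surjective and `M` is an `S`-module, then `S ⊗[R] M ≃ₗ[S] M`. -/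
noncomputable def tensorEquivOfSurjective (hs : Function.Surjective (algebraMap R S)) :
    S ⊗[R] M ≃ₗ[S] M := by
  refine LinearEquiv.ofLinear (LinearMap.liftBaseChange S LinearMap.id)
    { toFun := fun m => (1 : S) ⊗ₜ[R] m
      map_add' := fun x y => TensorProduct.tmul_add _ x y
      map_smul' := fun s m => ?_ } ?_ ?_
  · simp only [RingHom.id_apply]
    rw [one_tmul_smul R S M hs, TensorProduct.smul_tmul', smul_eq_mul, mul_one]
  · apply LinearMap.ext
    intro m
    simp
  · apply LinearMap.restrictScalars_injective R
    apply TensorProduct.ext'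
    intro s m
    simp only [LinearMap.coe_comp, LinearMap.coe_restrictScalars, Function.comp_apply,
      LinearMap.liftBaseChange_tmul, LinearMap.id_coe, id_eq, LinearMap.coe_mk,
      AddHom.coe_mk, LinearMap.id_comp]
    rw [one_tmul_smul R S M hs]

/-- If `R → S` is surjective and `M` is an `S`-module flat over `R`, it is flat over `S`. -/
lemma flat_of_surjective (hs : Function.Surjective (algebraMap R S)) [Module.Flat R M] :
    Module.Flat S M :=
  Module.Flat.of_linearEquiv (tensorEquivOfSurjective R S M hs).symm

end FlatSurj

section LocProd

variable (A B : Type*) [CommRing A] [CommRing B]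

lemma mem_nonZeroDivisors_prod {x : A × B} :
    x ∈ nonZeroDivisors (A × B) ↔ x.1 ∈ nonZeroDivisors A ∧ x.2 ∈ nonZeroDivisors B := by
  simp only [mem_nonZeroDivisors_iff_right]
  constructor
  · intro hx
    constructor
    · intro a ha
      have := hx (a, 0) (by ext <;> simp [ha])
      simpa using congrArg Prod.fst this
    · intro b hb
      have := hx (0, b) (by ext <;> simp [hb])
      simpa using congrArg Prod.snd this
  · rintro ⟨h1, h2⟩ ⟨a, b⟩ hab
    have e1 : a * x.1 = 0 := congrArg Prod.fst hab
    have e2 : b * x.2 = 0 := congrArg Prod.snd hab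
    ext
    · exact h1 a e1
    · exact h2 b e2

noncomputable instance prodLocAlgebra :
    Algebra (A × B) (Localization A⁰ × Localization B⁰) :=
  ((algebraMap A (Localization A⁰)).prodMap (algebraMap B (Localization B⁰))).toAlgebra

lemma prodLoc_algebraMap_apply (x : A × B) :
    algebraMap (A × B) (Localization A⁰ × Localization B⁰) x =
      (algebraMap A (Localization A⁰) x.1, algebraMap B (Localization B⁰) x.2) := rfl

instance prodLoc_isLocalization :
    IsLocalization (A × B)⁰ (Localization A⁰ × Localization B⁰) where
  map_units := by
    rintro ⟨⟨a, b⟩, hab⟩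
    obtain ⟨h1, h2⟩ := (mem_nonZeroDivisors_prod A B).mp hab
    have u1 := IsLocalization.map_units (Localization A⁰) ⟨a, h1⟩
    have u2 := IsLocalization.map_units (Localization B⁰) ⟨b, h2⟩
    obtain ⟨v1, hv1⟩ := isUnit_iff_exists_inv.mp u1
    obtain ⟨v2, hv2⟩ := isUnit_iff_exists_inv.mp u2
    exact isUnit_iff_exists_inv.mpr ⟨(v1, v2), by
      rw [prodLoc_algebraMap_apply]; ext <;> simp [hv1, hv2]⟩
  surj := by
    rintro ⟨z1, z2⟩
    obtain ⟨⟨x1, s1⟩, hx1⟩ := IsLocalization.surj A⁰ z1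
    obtain ⟨⟨x2, s2⟩, hx2⟩ := IsLocalization.surj B⁰ z2
    refine ⟨⟨(x1, x2), ⟨(s1, s2), (mem_nonZeroDivisors_prod A B).mpr ⟨s1.2, s2.2⟩⟩⟩, ?_⟩
    rw [prodLoc_algebraMap_apply, prodLoc_algebraMap_apply]
    ext <;> simpa using (by assumption)
  exists_of_eq := by
    rintro ⟨x1, x2⟩ ⟨y1, y2⟩ h
    rw [prodLoc_algebraMap_apply, prodLoc_algebraMap_apply] at h
    obtain ⟨h1, h2⟩ := Prod.ext_iff.mp h
    obtain ⟨c1, hc1⟩ := IsLocalization.exists_of_eq (M := A⁰) h1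
    obtain ⟨c2, hc2⟩ := IsLocalization.exists_of_eq (M := B⁰) h2
    refine ⟨⟨(c1, c2), (mem_nonZeroDivisors_prod A B).mpr ⟨c1.2, c2.2⟩⟩, ?_⟩
    ext
    · simpa using hc1
    · simpa using hc2

end LocProd

section Sub
variable {A B : Type*} [CommRing A] [CommRing B]

def prodSub (D₁ : Subalgebra A (Localization A⁰)) (D₂ : Subalgebra B (Localization B⁰)) :
    Subalgebra (A × B) (Localization A⁰ × Localization B⁰) where
  carrier := D₁ ×ˢ D₂
  mul_mem' := fun hx hy => ⟨mul_mem hx.1 hy.1, mul_mem hx.2 hy.2⟩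
  add_mem' := fun hx hy => ⟨add_mem hx.1 hy.1, add_mem hx.2 hy.2⟩
  one_mem' := ⟨one_mem _, one_mem _⟩
  zero_mem' := ⟨zero_mem _, zero_mem _⟩
  algebraMap_mem' := fun r => ⟨D₁.algebraMap_mem r.1, D₂.algebraMap_mem r.2⟩

variable (D₁ : Subalgebra A (Localization A⁰)) (D₂ : Subalgebra B (Localization B⁰))

def prodSubEquiv : prodSub D₁ D₂ ≃+* (D₁ × D₂) where
  toFun c := (⟨c.1.1, c.2.1⟩, ⟨c.1.2, c.2.2⟩)
  invFun d := ⟨(d.1.1, d.2.1), d.1.2, d.2.2⟩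
  left_inv c := rfl
  right_inv d := rfl
  map_mul' c d := rfl
  map_add' c d := rfl

lemma prodSubEquiv_comp_algebraMap :
    ((prodSubEquiv D₁ D₂ : prodSub D₁ D₂ →+* D₁ × D₂)).comp
        (algebraMap (A × B) (prodSub D₁ D₂)) =
      (algebraMap A D₁).prodMap (algebraMap B D₂) := rfl

section ModuleInstances

noncomputable local instance algebraFst : Algebra (A × B) A := (RingHom.fst A B).toAlgebra
noncomputable local instance algebraSnd : Algebra (A × B) B := (RingHom.snd A B).toAlgebra

noncomputable local instance moduleD₁ : Algebra (A × B) D₁ :=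
  ((algebraMap A D₁).comp (RingHom.fst A B)).toAlgebra
noncomputable local instance moduleD₂ : Algebra (A × B) D₂ :=
  ((algebraMap B D₂).comp (RingHom.snd A B)).toAlgebra

local instance towerD₁ : IsScalarTower (A × B) A D₁ := IsScalarTower.of_algebraMap_eq' rfl
local instance towerD₂ : IsScalarTower (A × B) B D₂ := IsScalarTower.of_algebraMap_eq' rfl

lemma flat_fst_ring : Module.Flat (A × B) A := by
  refine Module.Flat.of_retract (R := A × B) (M := A × B)
    { toFun := fun a => (a, 0)
      map_add' := by intro a b; ext <;> simp
      map_smul' := by intro r a; ext <;> simp [Algebra.smul_def, RingHom.algebraMap_toAlgebra] }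
    { toFun := fun x => x.1
      map_add' := by intro a b; simp
      map_smul' := by intro r x; simp [Algebra.smul_def, RingHom.algebraMap_toAlgebra] }
    (by apply LinearMap.ext; intro a; rfl)

lemma flat_snd_ring : Module.Flat (A × B) B := by
  refine Module.Flat.of_retract (R := A × B) (M := A × B)
    { toFun := fun b => (0, b)
      map_add' := by intro a b; ext <;> simp
      map_smul' := by intro r a; ext <;> simp [Algebra.smul_def, RingHom.algebraMap_toAlgebra] }
    { toFun := fun x => x.2
      map_add' := by intro a b; simp
      map_smul' := by intro r x; simp [Algebra.smul_def, RingHom.algebraMap_toAlgebra] }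
    (by apply LinearMap.ext; intro a; rfl)

noncomputable def prodSubLinearEquiv : prodSub D₁ D₂ ≃ₗ[A × B] (D₁ × D₂) :=
  { prodSubEquiv D₁ D₂ with
    map_smul' := fun r c => rfl }

lemma flat_prodSub_iff :
    Module.Flat (A × B) (prodSub D₁ D₂) ↔ Module.Flat A D₁ ∧ Module.Flat B D₂ := by
  rw [Module.Flat.equiv_iff (prodSubLinearEquiv D₁ D₂)]
  constructor
  · intro h
    have h₁ : Module.Flat (A × B) D₁ := flat_fst_of_prod (A × B) D₁ D₂
    have h₂ : Module.Flat (A × B) D₂ := flat_snd_of_prod (A × B) D₁ D₂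
    constructor
    · exact flat_of_surjective (A × B) A D₁ Prod.fst_surjective
    · exact flat_of_surjective (A × B) B D₂ Prod.snd_surjective
  · rintro ⟨h₁, h₂⟩
    have hA : Module.Flat (A × B) A := flat_fst_ring
    have hB : Module.Flat (A × B) B := flat_snd_ring
    have f₁ : Module.Flat (A × B) D₁ := Module.Flat.trans (A × B) A D₁
    have f₂ : Module.Flat (A × B) D₂ := Module.Flat.trans (A × B) B D₂
    exact flat_prod (A × B) D₁ D₂

end ModuleInstances
lemma gd_prodSub_iff :
    GoingDown (algebraMap (A × B) (prodSub D₁ D₂)) ↔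
      GoingDown (algebraMap A D₁) ∧ GoingDown (algebraMap B D₂) := by
  constructor
  · intro h
    have h' := goingDown_of_comp_equiv (prodSubEquiv D₁ D₂)
      (prodSubEquiv_comp_algebraMap D₁ D₂) h
    exact ⟨goingDown_fst_of_prodMap h', goingDown_snd_of_prodMap h'⟩
  · rintro ⟨h₁, h₂⟩
    refine goingDown_of_comp_equiv (prodSubEquiv D₁ D₂).symm ?_ (goingDown_prodMap h₁ h₂)
    rw [← prodSubEquiv_comp_algebraMap D₁ D₂]
    refine RingHom.ext fun x => ?_
    exact (prodSubEquiv D₁ D₂).symm_apply_apply _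

def fstSub (C : Subalgebra (A × B) (Localization A⁰ × Localization B⁰)) :
    Subalgebra A (Localization A⁰) where
  carrier := Prod.fst '' (C : Set (Localization A⁰ × Localization B⁰))
  mul_mem' := by
    rintro x y ⟨u, hu, rfl⟩ ⟨v, hv, rfl⟩
    exact ⟨u * v, mul_mem hu hv, Prod.fst_mul u v⟩
  add_mem' := by
    rintro x y ⟨u, hu, rfl⟩ ⟨v, hv, rfl⟩
    exact ⟨u + v, add_mem hu hv, Prod.fst_add u v⟩
  one_mem' := ⟨1, one_mem _, rfl⟩
  zero_mem' := ⟨0, zero_mem _, rfl⟩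
  algebraMap_mem' := fun r =>
    ⟨algebraMap (A × B) (Localization A⁰ × Localization B⁰) (r, 1), C.algebraMap_mem _, rfl⟩

def sndSub (C : Subalgebra (A × B) (Localization A⁰ × Localization B⁰)) :
    Subalgebra B (Localization B⁰) where
  carrier := Prod.snd '' (C : Set (Localization A⁰ × Localization B⁰))
  mul_mem' := by
    rintro x y ⟨u, hu, rfl⟩ ⟨v, hv, rfl⟩
    exact ⟨u * v, mul_mem hu hv, Prod.snd_mul u v⟩
  add_mem' := by
    rintro x y ⟨u, hu, rfl⟩ ⟨v, hv, rfl⟩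
    exact ⟨u + v, add_mem hu hv, Prod.snd_add u v⟩
  one_mem' := ⟨1, one_mem _, rfl⟩
  zero_mem' := ⟨0, zero_mem _, rfl⟩
  algebraMap_mem' := fun r =>
    ⟨algebraMap (A × B) (Localization A⁰ × Localization B⁰) (1, r), C.algebraMap_mem _, rfl⟩

lemma mem_prodSub {D₁ : Subalgebra A (Localization A⁰)} {D₂ : Subalgebra B (Localization B⁰)}
    {x : Localization A⁰ × Localization B⁰} :
    x ∈ prodSub D₁ D₂ ↔ x.1 ∈ D₁ ∧ x.2 ∈ D₂ := Iff.rfl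

lemma mem_fstSub {C : Subalgebra (A × B) (Localization A⁰ × Localization B⁰)}
    {x : Localization A⁰} :
    x ∈ fstSub C ↔ ∃ u ∈ C, u.1 = x := by
  constructor
  · rintro ⟨u, hu, rfl⟩; exact ⟨u, hu, rfl⟩
  · rintro ⟨u, hu, rfl⟩; exact ⟨u, hu, rfl⟩

lemma mem_sndSub {C : Subalgebra (A × B) (Localization A⁰ × Localization B⁰)}
    {x : Localization B⁰} :
    x ∈ sndSub C ↔ ∃ u ∈ C, u.2 = x := by
  constructor
  · rintro ⟨u, hu, rfl⟩; exact ⟨u, hu, rfl⟩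
  · rintro ⟨u, hu, rfl⟩; exact ⟨u, hu, rfl⟩

lemma prodSub_fstSub_sndSub (C : Subalgebra (A × B) (Localization A⁰ × Localization B⁰)) :
    prodSub (fstSub C) (sndSub C) = C := by
  apply le_antisymm
  · rintro ⟨x, y⟩ hxy
    obtain ⟨h1, h2⟩ := mem_prodSub.mp hxy
    obtain ⟨u, hu, hux⟩ := mem_fstSub.mp h1
    obtain ⟨v, hv, hvy⟩ := mem_sndSub.mp h2
    have he₁ : (((1 : Localization A⁰), (0 : Localization B⁰))) ∈ C := by
      have := C.algebraMap_mem ((1 : A), (0 : B))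
      rw [prodLoc_algebraMap_apply] at this
      simpa using this
    have he₂ : (((0 : Localization A⁰), (1 : Localization B⁰))) ∈ C := by
      have := C.algebraMap_mem ((0 : A), (1 : B))
      rw [prodLoc_algebraMap_apply] at this
      simpa using this
    have hxy2 : ((x, y) : Localization A⁰ × Localization B⁰) = (1, 0) * u + (0, 1) * v := by
      ext
      · simpa using hux.symm
      · simpa using hvy.symm
    rw [hxy2]
    exact add_mem (mul_mem he₁ hu) (mul_mem he₂ hv)
  · intro z hz
    exact mem_prodSub.mpr ⟨mem_fstSub.mpr ⟨z, hz, rfl⟩, mem_sndSub.mpr ⟨z, hz, rfl⟩⟩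

lemma gd_bot {R : Type*} [CommRing R] :
    GoingDown (algebraMap R (⊥ : Subalgebra R (Localization R⁰))) := by
  apply goingDown_of_bijective
  constructor
  · intro x y hxy
    exact IsLocalization.injective (Localization R⁰) (le_refl R⁰) (congrArg Subtype.val hxy)
  · rintro ⟨x, hx⟩
    obtain ⟨r, hr⟩ := Algebra.mem_bot.mp hx
    exact ⟨r, Subtype.ext hr⟩

lemma forall_sub_congr {R T T' : Type*} [CommRing R] [CommRing T] [CommRing T']
    [Algebra R T] [Algebra R T'] (e : T ≃ₐ[R] T')
    (h : ∀ C : Subalgebra R T, GoingDown (algebraMap R C) → Module.Flat R C) :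
    ∀ C' : Subalgebra R T', GoingDown (algebraMap R C') → Module.Flat R C' := by
  intro C' hgd
  let σ := e.symm.subalgebraMap C'
  have hgd2 : GoingDown (algebraMap R (C'.map (e.symm : T' →ₐ[R] T))) :=
    goingDown_of_comp_equiv (σ : C' ≃+* (C'.map (e.symm : T' →ₐ[R] T)))
      (by ext r; exact congrArg Subtype.val (σ.commutes r)) hgd
  have hf := h _ hgd2
  exact Module.Flat.of_linearEquiv σ.toLinearEquiv

end Sub

/-- A ring is perinormal if every going-down overring is flat. -/
def Perinormal (A : Type*) [CommRing A] : Prop :=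
  ∀ B : Subalgebra A (Localization (nonZeroDivisors A)),
    GoingDown (algebraMap A B) → Module.Flat A B

theorem statement19 (A B : Type*) [CommRing A] [CommRing B] :
    Perinormal (A × B) ↔ (Perinormal A ∧ Perinormal B) := by
  have e : Localization (A × B)⁰ ≃ₐ[A × B] (Localization A⁰ × Localization B⁰) :=
    IsLocalization.algEquiv (A × B)⁰ _ _
  constructor
  · intro h
    have h' : ∀ C : Subalgebra (A × B) (Localization A⁰ × Localization B⁰),
        GoingDown (algebraMap (A × B) C) → Module.Flat (A × B) C :=
      forall_sub_congr e h
    constructor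
    · intro D₁ hgd
      have hC := h' (prodSub D₁ ⊥) ((gd_prodSub_iff D₁ ⊥).mpr ⟨hgd, gd_bot⟩)
      exact ((flat_prodSub_iff D₁ ⊥).mp hC).1
    · intro D₂ hgd
      have hC := h' (prodSub ⊥ D₂) ((gd_prodSub_iff ⊥ D₂).mpr ⟨gd_bot, hgd⟩)
      exact ((flat_prodSub_iff ⊥ D₂).mp hC).2
  · rintro ⟨hA, hB⟩
    refine forall_sub_congr e.symm ?_
    intro C hgd
    have hC := prodSub_fstSub_sndSub C
    have hgd' : GoingDown (algebraMap (A × B) (prodSub (fstSub C) (sndSub C))) := by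
      rw [hC]; exact hgd
    obtain ⟨g1, g2⟩ := (gd_prodSub_iff _ _).mp hgd'
    have f := (flat_prodSub_iff (fstSub C) (sndSub C)).mpr ⟨hA _ g1, hB _ g2⟩
    rwa [hC] at f
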